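/- For every ℓ ∈ ℕ≥1 ∪ {∞}, there exists an integral domain R that is an IDF domain, is not atomic, and contains exactly ℓ irreducible elements up to associates (i.e., the set of associate classes of irreducible elements of R has cardinality ℓ when ℓ is finite, and is countably infinite when ℓ = ∞). -/

import Mathlib

/-- An element is atomic if it is a unit or a finite product of atoms; equivalently, some
finite multiset of atoms has product associated to it. -/
def IsAtomicElem {α : Type*} [CommMonoid α] (a : α) : Prop :=
  ∃ s : Multiset α, (∀ p ∈ s, Irreducible p) ∧ Associated s.prod a

/-- An integral domain is an IDF domain if every nonzero element is divisible by only
finitely many atoms up to associates. -/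
def IsIDFDomain (R : Type*) [CommRing R] : Prop :=
  ∀ a : R, a ≠ 0 → {p : Associates R | Irreducible p ∧ p ∣ Associates.mk a}.Finite

namespace NonAtomicIDF

noncomputable section

/-- the i-th prime -/
def pr (i : ℕ) : ℕ := Nat.nth Nat.Prime i

lemma pr_prime (i : ℕ) : (pr i).Prime := Nat.prime_nth_prime i

instance (i : ℕ) : Fact (pr i).Prime := ⟨pr_prime i⟩

lemma pr_inj : Function.Injective pr := Nat.nth_injective Nat.infinite_setOf_prime

lemma pr_ne_zero (i : ℕ) : (pr i : ℚ) ≠ 0 := by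
  exact_mod_cast (pr_prime i).ne_zero

/-- the p_i-adic valuation on ℚ -/
def v (i : ℕ) (q : ℚ) : ℤ := padicValRat (pr i) q

lemma v_zero (i : ℕ) : v i 0 = 0 := padicValRat.zero
lemma v_one (i : ℕ) : v i 1 = 0 := padicValRat.one

lemma v_mul (i : ℕ) {q r : ℚ} (hq : q ≠ 0) (hr : r ≠ 0) :
    v i (q * r) = v i q + v i r := padicValRat.mul hq hr

lemma v_inv (i : ℕ) (q : ℚ) : v i q⁻¹ = -v i q := padicValRat.inv q

lemma v_pr (i j : ℕ) : v i (pr j : ℚ) = if j = i then 1 else 0 := by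
  by_cases h : j = i
  · subst h
    simp [v, padicValRat.self (pr_prime j).one_lt]
  · rw [if_neg h]
    have : (pr j : ℚ) = ((pr j : ℕ) : ℚ) := rfl
    rw [v, this, padicValRat.of_nat]
    have : padicValNat (pr i) (pr j) = 0 :=
      padicValNat.eq_zero_of_not_dvd (by
        intro hdvd
        exact h (pr_inj ((Nat.prime_dvd_prime_iff_eq (pr_prime i) (pr_prime j)).1 hdvd)).symm)
    simp [this]

lemma v_nat_nonneg (i : ℕ) (m : ℕ) : 0 ≤ v i (m : ℚ) := by
  rw [v, padicValRat.of_nat]; positivity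

open PowerSeries in
/-- the ring `ℤ_{(p₀)} ∩ ... ∩ ℤ_{(p_{n-1})} + x ℚ[[x]]` -/
def Rfin (n : ℕ) : Subring (PowerSeries ℚ) where
  carrier := {f | ∀ i < n, 0 ≤ v i (constantCoeff (R := ℚ) f)}
  mul_mem' := by
    intro a b ha hb i hi
    rcases eq_or_ne (constantCoeff (R := ℚ) a) 0 with h | h
    · simp [map_mul, h, v_zero]
    rcases eq_or_ne (constantCoeff (R := ℚ) b) 0 with h' | h'
    · simp [map_mul, h', v_zero]
    rw [map_mul, v_mul i h h']
    exact add_nonneg (ha i hi) (hb i hi)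
  one_mem' := by intro i hi; simp [v_one]
  add_mem' := by
    intro a b ha hb i hi
    rw [map_add]
    rcases eq_or_ne (constantCoeff (R := ℚ) a + constantCoeff (R := ℚ) b) 0 with h | h
    · simp [h, v_zero]
    rcases eq_or_ne (constantCoeff (R := ℚ) a) 0 with h1 | h1
    · rw [h1, zero_add]; exact hb i hi
    rcases eq_or_ne (constantCoeff (R := ℚ) b) 0 with h2 | h2
    · rw [h2, add_zero]; exact ha i hi
    calc (0:ℤ) ≤ min (v i (constantCoeff (R := ℚ) a)) (v i (constantCoeff (R := ℚ) b)) :=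
            le_min (ha i hi) (hb i hi)
      _ ≤ _ := padicValRat.min_le_padicValRat_add h
  zero_mem' := by intro i hi; simp [v_zero]
  neg_mem' := by
    intro a ha i hi
    rw [map_neg]
    have : v i (-constantCoeff (R := ℚ) a) = v i (constantCoeff (R := ℚ) a) := padicValRat.neg _
    rw [this]; exact ha i hi

variable {n : ℕ}

lemma mem_Rfin_iff {f : PowerSeries ℚ} :
    f ∈ Rfin n ↔ ∀ i < n, 0 ≤ v i (PowerSeries.constantCoeff (R := ℚ) f) := Iff.rfl

/-- constant coefficient as a ring hom from the subring -/
def cc : Rfin n →+* ℚ := (PowerSeries.constantCoeff (R := ℚ)).comp (Rfin n).subtype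

lemma cc_apply (f : Rfin n) : cc f = PowerSeries.constantCoeff (R := ℚ) f.val := rfl

lemma cc_nonneg (f : Rfin n) {i : ℕ} (hi : i < n) : 0 ≤ v i (cc f) := f.2 i hi

lemma isUnit_iff_fin (f : Rfin n) :
    IsUnit f ↔ cc f ≠ 0 ∧ ∀ i < n, v i (cc f) = 0 := by
  constructor
  · rintro ⟨u, rfl⟩
    have h1 : (u.val * u.inv : Rfin n) = 1 := u.val_inv
    have h2 : cc u.val * cc u.inv = 1 := by rw [← map_mul, h1, map_one]
    have hne : cc u.val ≠ 0 := left_ne_zero_of_mul_eq_one h2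
    have hne' : cc u.inv ≠ 0 := right_ne_zero_of_mul_eq_one h2
    refine ⟨hne, fun i hi => ?_⟩
    have := v_mul i hne hne'
    rw [h2, v_one] at this
    have h3 := cc_nonneg u.val hi
    have h4 := cc_nonneg u.inv hi
    omega
  · rintro ⟨hne, hv⟩
    have hinv : (f.val)⁻¹ ∈ Rfin n := by
      intro i hi
      rw [PowerSeries.constantCoeff_inv, ← cc_apply, v_inv, hv i hi]; norm_num
    refine IsUnit.of_mul_eq_one (a := f) ⟨(f.val)⁻¹, hinv⟩ ?_
    exact Subtype.ext (PowerSeries.mul_inv_cancel f.val hne)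

/-- total valuation -/
def w (n : ℕ) (q : ℚ) : ℤ := ∑ i ∈ Finset.range n, v i q

lemma w_mul {q r : ℚ} (hq : q ≠ 0) (hr : r ≠ 0) : w n (q * r) = w n q + w n r := by
  simp only [w, v_mul _ hq hr]
  rw [Finset.sum_add_distrib]

lemma w_nonneg (f : Rfin n) : 0 ≤ w n (cc f) :=
  Finset.sum_nonneg fun i hi => f.2 i (Finset.mem_range.1 hi)

lemma unit_iff_w (f : Rfin n) (hne : cc f ≠ 0) : IsUnit f ↔ w n (cc f) = 0 := by
  rw [isUnit_iff_fin]
  constructor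
  · rintro ⟨-, hv⟩
    exact Finset.sum_eq_zero fun i hi => hv i (Finset.mem_range.1 hi)
  · intro hw
    refine ⟨hne, fun i hi => ?_⟩
    have := (Finset.sum_eq_zero_iff_of_nonneg
      (fun j hj => f.2 j (Finset.mem_range.1 hj))).1 hw i (Finset.mem_range.2 hi)
    exact this

/-- the constant power series `pr i`, as an element of `Rfin n` -/
def CP (n : ℕ) (i : ℕ) : Rfin n :=
  ⟨PowerSeries.C (R := ℚ) (pr i : ℚ), by
    refine mem_Rfin_iff.mpr fun j hj => ?_
    rw [PowerSeries.constantCoeff_C, v_pr]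
    split <;> norm_num⟩

lemma cc_CP (i : ℕ) : cc (CP n i) = (pr i : ℚ) := by
  simp [cc_apply, CP]

lemma sum_ite_one {i : ℕ} (hi : i < n) :
    (∑ j ∈ Finset.range n, if i = j then (1:ℤ) else 0) = 1 := by
  rw [Finset.sum_ite_eq]
  simp [Finset.mem_range.2 hi]

lemma w_CP {i : ℕ} (hi : i < n) : w n ((pr i : ℚ)) = 1 := by
  unfold w
  rw [Finset.sum_congr rfl fun j _ => v_pr j i]
  exact sum_ite_one hi

lemma CP_not_unit {i : ℕ} (hi : i < n) : ¬ IsUnit (CP n i) := by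
  intro hu
  have := ((unit_iff_w _ (by rw [cc_CP]; exact pr_ne_zero i)).1 hu)
  rw [cc_CP, w_CP hi] at this
  exact one_ne_zero this

lemma exists_factor (f : Rfin n) (hne : cc f ≠ 0) {i : ℕ} (hi : i < n)
    (h1 : 1 ≤ v i (cc f)) :
    ∃ g : Rfin n, f = CP n i * g ∧ cc g ≠ 0 ∧
      ∀ j < n, v j (cc g) = v j (cc f) - if i = j then 1 else 0 := by
  have hccg : PowerSeries.constantCoeff (R := ℚ) (f.val * PowerSeries.C (R := ℚ) ((pr i : ℚ))⁻¹)
      = cc f * ((pr i : ℚ))⁻¹ := by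
    rw [map_mul, PowerSeries.constantCoeff_C, cc_apply]
  have hgne : cc f * ((pr i : ℚ))⁻¹ ≠ 0 :=
    mul_ne_zero hne (inv_ne_zero (pr_ne_zero i))
  have hv : ∀ j, v j (cc f * ((pr i : ℚ))⁻¹) = v j (cc f) - if i = j then 1 else 0 := by
    intro j
    rw [v_mul j hne (inv_ne_zero (pr_ne_zero i)), v_inv, v_pr]
    ring
  have hgmem : f.val * PowerSeries.C (R := ℚ) ((pr i : ℚ))⁻¹ ∈ Rfin n := by
    refine mem_Rfin_iff.mpr fun j hj => ?_
    rw [hccg, hv j]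
    rcases eq_or_ne i j with rfl | hij
    · simp; omega
    · rw [if_neg hij]
      have := f.2 j hj
      rw [← cc_apply] at this
      omega
  refine ⟨⟨_, hgmem⟩, ?_, ?_, ?_⟩
  · refine Subtype.ext ?_
    show f.val = PowerSeries.C (R := ℚ) (pr i : ℚ) * (f.val * PowerSeries.C (R := ℚ) ((pr i : ℚ))⁻¹)
    rw [mul_comm, mul_assoc, ← map_mul, inv_mul_cancel₀ (pr_ne_zero i), map_one, mul_one]
  · show PowerSeries.constantCoeff (R := ℚ) (f.val * PowerSeries.C (R := ℚ) ((pr i : ℚ))⁻¹) ≠ 0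
    rw [hccg]; exact hgne
  · intro j hj
    show v j (PowerSeries.constantCoeff (R := ℚ) (f.val * PowerSeries.C (R := ℚ) ((pr i : ℚ))⁻¹)) = _
    rw [hccg, hv j]

lemma irreducible_iff_fin (hn : 0 < n) (f : Rfin n) :
    Irreducible f ↔ cc f ≠ 0 ∧ w n (cc f) = 1 := by
  constructor
  · intro h
    have hne : cc f ≠ 0 := by
      intro hc
      have hgmem : f.val * PowerSeries.C (R := ℚ) ((pr 0 : ℚ))⁻¹ ∈ Rfin n := by
        refine mem_Rfin_iff.mpr fun j hj => ?_
        rw [map_mul, PowerSeries.constantCoeff_C, ← cc_apply f, hc, zero_mul, v_zero]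
      have heq : f = CP n 0 * ⟨_, hgmem⟩ := by
        refine Subtype.ext ?_
        show f.val = PowerSeries.C (R := ℚ) (pr 0 : ℚ) * (f.val * PowerSeries.C (R := ℚ) ((pr 0 : ℚ))⁻¹)
        rw [mul_comm, mul_assoc, ← map_mul, inv_mul_cancel₀ (pr_ne_zero 0), map_one, mul_one]
      rcases h.isUnit_or_isUnit heq with hu | hu
      · exact CP_not_unit hn hu
      · rw [isUnit_iff_fin] at hu
        apply hu.1
        show PowerSeries.constantCoeff (R := ℚ) (f.val * PowerSeries.C (R := ℚ) ((pr 0 : ℚ))⁻¹) = 0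
        rw [map_mul, ← cc_apply f, hc, zero_mul]
    refine ⟨hne, ?_⟩
    have hnonneg := w_nonneg f
    have h0 : w n (cc f) ≠ 0 := fun h0 => h.not_isUnit ((unit_iff_w f hne).2 h0)
    by_contra hw
    have h2 : 2 ≤ w n (cc f) := by omega
    have hex : ∃ i < n, 1 ≤ v i (cc f) := by
      by_contra hall
      push_neg at hall
      have hz : ∀ i ∈ Finset.range n, v i (cc f) = 0 := fun i hi =>
        le_antisymm (by have := hall i (Finset.mem_range.1 hi); omega)
          (f.2 i (Finset.mem_range.1 hi))
      have : w n (cc f) = 0 := Finset.sum_eq_zero hz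
      omega
    obtain ⟨i, hi, hvi⟩ := hex
    obtain ⟨g, hfg, hgne, hgv⟩ := exists_factor f hne hi hvi
    rcases h.isUnit_or_isUnit hfg with hu | hu
    · exact CP_not_unit hi hu
    · have hwg : w n (cc g) = w n (cc f) - 1 := by
        unfold w
        rw [Finset.sum_congr rfl fun j hj => hgv j (Finset.mem_range.1 hj),
          Finset.sum_sub_distrib, sum_ite_one hi]
      have := (unit_iff_w g hgne).1 hu
      omega
  · rintro ⟨hne, hw⟩
    constructor
    · intro hu
      have := (unit_iff_w f hne).1 hu
      omega
    · intro a b hab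
      have hcc : cc f = cc a * cc b := by rw [hab, map_mul]
      have hab0 : cc a * cc b ≠ 0 := hcc ▸ hne
      have ha0 : cc a ≠ 0 := left_ne_zero_of_mul hab0
      have hb0 : cc b ≠ 0 := right_ne_zero_of_mul hab0
      have hsum : w n (cc a) + w n (cc b) = 1 := by
        rw [← w_mul ha0 hb0, ← hcc, hw]
      have hA := w_nonneg a
      have hB := w_nonneg b
      have : w n (cc a) = 0 ∨ w n (cc b) = 0 := by omega
      rcases this with h' | h'
      · exact Or.inl ((unit_iff_w a ha0).2 h')
      · exact Or.inr ((unit_iff_w b hb0).2 h')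

lemma assoc_CP (f : Rfin n) (hf : cc f ≠ 0) (hw : w n (cc f) = 1) :
    ∃ i < n, Associated (CP n i) f := by
  have hex : ∃ i < n, 1 ≤ v i (cc f) := by
    by_contra hall
    push_neg at hall
    have hz : ∀ i ∈ Finset.range n, v i (cc f) = 0 := fun i hi =>
      le_antisymm (by have := hall i (Finset.mem_range.1 hi); omega)
        (f.2 i (Finset.mem_range.1 hi))
    have : w n (cc f) = 0 := Finset.sum_eq_zero hz
    omega
  obtain ⟨i, hi, hvi⟩ := hex
  obtain ⟨g, hfg, hgne, hgv⟩ := exists_factor f hf hi hvi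
  have hwg : w n (cc g) = 0 := by
    unfold w at hw ⊢
    rw [Finset.sum_congr rfl fun j hj => hgv j (Finset.mem_range.1 hj),
      Finset.sum_sub_distrib, sum_ite_one hi]
    omega
  obtain ⟨u, hu⟩ := (unit_iff_w g hgne).2 hwg
  exact ⟨i, hi, ⟨u, by rw [hu]; exact hfg.symm⟩⟩

lemma irr_set_fin (hn : 0 < n) :
    {p : Associates (Rfin n) | Irreducible p}
      = (fun i : Fin n => Associates.mk (CP n i.val)) '' Set.univ := by
  ext p
  simp only [Set.mem_setOf_eq, Set.mem_image, Set.mem_univ, true_and]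
  constructor
  · intro hp
    obtain ⟨f, rfl⟩ := Associates.mk_surjective p
    have hf := Associates.irreducible_mk.1 hp
    rw [irreducible_iff_fin hn] at hf
    obtain ⟨i, hi, hassoc⟩ := assoc_CP f hf.1 hf.2
    exact ⟨⟨i, hi⟩, (Associates.mk_eq_mk_iff_associated.2 hassoc)⟩
  · rintro ⟨i, rfl⟩
    rw [Associates.irreducible_mk, irreducible_iff_fin hn]
    refine ⟨by rw [cc_CP]; exact pr_ne_zero i.val, by rw [cc_CP]; exact w_CP i.2⟩

lemma CP_inj : Function.Injective (fun i : Fin n => Associates.mk (CP n i.val)) := by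
  intro i j h
  rw [Associates.mk_eq_mk_iff_associated] at h
  obtain ⟨u, hu⟩ := h
  have hc : (pr i.val : ℚ) * cc (u : Rfin n) = (pr j.val : ℚ) := by
    have := congrArg (cc (n := n)) hu
    rwa [map_mul, cc_CP, cc_CP] at this
  have huu := u.isUnit
  rw [isUnit_iff_fin] at huu
  have hvi := huu.2 i.val i.2
  have hv := congrArg (v i.val) hc
  rw [v_mul _ (pr_ne_zero _) huu.1, v_pr, v_pr, hvi] at hv
  by_cases hij : j.val = i.val
  · exact Fin.ext hij.symm
  · rw [if_pos rfl, if_neg hij] at hv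
    omega

lemma XX_mem : (PowerSeries.X : PowerSeries ℚ) ∈ Rfin n :=
  mem_Rfin_iff.mpr fun i _ => by rw [PowerSeries.constantCoeff_X, v_zero]

lemma not_atomic_fin (hn : 0 < n) : ¬ (∀ a : Rfin n, a ≠ 0 → IsAtomicElem a) := by
  intro hall
  have hX : (⟨PowerSeries.X, XX_mem⟩ : Rfin n) ≠ 0 := by
    intro h
    exact PowerSeries.X_ne_zero (congrArg Subtype.val h)
  obtain ⟨s, hs, hassoc⟩ := hall _ hX
  obtain ⟨u, hu⟩ := hassoc
  have hcc := congrArg (cc (n := n)) hu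
  rw [map_mul, map_multiset_prod] at hcc
  have hccX : cc (⟨PowerSeries.X, XX_mem⟩ : Rfin n) = 0 := PowerSeries.constantCoeff_X
  rw [hccX] at hcc
  have hne : (Multiset.map (cc (n := n)) s).prod ≠ 0 := by
    apply Multiset.prod_ne_zero
    intro h0
    obtain ⟨f, hfs, hf0⟩ := Multiset.mem_map.1 h0
    exact ((irreducible_iff_fin hn f).1 (hs f hfs)).1 hf0
  have hune : cc (u : Rfin n) ≠ 0 := by
    have h' := u.isUnit
    rw [isUnit_iff_fin] at h'
    exact h'.1
  exact (mul_ne_zero hne hune) hcc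

lemma idf_fin (hn : 0 < n) : IsIDFDomain (Rfin n) := by
  intro a _
  have hfin : {p : Associates (Rfin n) | Irreducible p}.Finite := by
    rw [irr_set_fin hn]
    exact Set.finite_univ.image _
  exact hfin.subset fun p hp => hp.1

lemma encard_fin (hn : 0 < n) :
    {p : Associates (Rfin n) | Irreducible p}.encard = n := by
  rw [irr_set_fin hn, Function.Injective.encard_image CP_inj, Set.encard_univ]
  simp

lemma countable_fin (hn : 0 < n) :
    {p : Associates (Rfin n) | Irreducible p}.Countable := by
  rw [irr_set_fin hn]
  exact (Set.finite_univ.image _).countable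

/-- the ring `ℤ_{(2)} + x ℚ[x]` -/
def Rinf : Subring (Polynomial ℚ) where
  carrier := {f | 0 ≤ v 0 (f.coeff 0)}
  mul_mem' := by
    intro a b ha hb
    simp only [Set.mem_setOf_eq, Polynomial.mul_coeff_zero] at *
    rcases eq_or_ne (a.coeff 0) 0 with h | h
    · simp [h, v_zero]
    rcases eq_or_ne (b.coeff 0) 0 with h' | h'
    · simp [h', v_zero]
    rw [v_mul 0 h h']
    exact add_nonneg ha hb
  one_mem' := by simp [Set.mem_setOf_eq, v_one]
  add_mem' := by
    intro a b ha hb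
    simp only [Set.mem_setOf_eq, Polynomial.coeff_add] at *
    rcases eq_or_ne (a.coeff 0 + b.coeff 0) 0 with h | h
    · simp [h, v_zero]
    rcases eq_or_ne (a.coeff 0) 0 with h1 | h1
    · rwa [h1, zero_add]
    rcases eq_or_ne (b.coeff 0) 0 with h2 | h2
    · rwa [h2, add_zero]
    calc (0:ℤ) ≤ min (v 0 (a.coeff 0)) (v 0 (b.coeff 0)) := le_min ha hb
      _ ≤ _ := padicValRat.min_le_padicValRat_add h
  zero_mem' := by simp [Set.mem_setOf_eq, v_zero]
  neg_mem' := by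
    intro a ha
    simp only [Set.mem_setOf_eq, Polynomial.coeff_neg] at *
    have : v 0 (-a.coeff 0) = v 0 (a.coeff 0) := padicValRat.neg _
    rwa [this]

lemma mem_Rinf_iff {f : Polynomial ℚ} : f ∈ Rinf ↔ 0 ≤ v 0 (f.coeff 0) := Iff.rfl

/-- constant coefficient hom on Rinf -/
def dd : Rinf →+* ℚ := Polynomial.constantCoeff.comp Rinf.subtype

lemma dd_apply (f : Rinf) : dd f = f.val.coeff 0 := rfl

lemma dd_nonneg (f : Rinf) : 0 ≤ v 0 (dd f) := f.2

lemma unit_dd (u : Rinfˣ) : dd (u : Rinf) ≠ 0 ∧ v 0 (dd (u : Rinf)) = 0 := by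
  have h1 : ((u : Rinf) * ((u⁻¹ : Rinfˣ) : Rinf)) = 1 := u.mul_inv
  have h2 : dd (u : Rinf) * dd ((u⁻¹ : Rinfˣ) : Rinf) = 1 := by
    rw [← map_mul, h1, map_one]
  have ha := left_ne_zero_of_mul_eq_one h2
  have hb := right_ne_zero_of_mul_eq_one h2
  have hv := v_mul 0 ha hb
  rw [h2, v_one] at hv
  have m1 := dd_nonneg (u : Rinf)
  have m2 := dd_nonneg ((u⁻¹ : Rinfˣ) : Rinf)
  exact ⟨ha, by omega⟩

lemma isUnit_iff_inf (f : Rinf) :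
    IsUnit f ↔ ∃ q : ℚ, f.val = Polynomial.C q ∧ q ≠ 0 ∧ v 0 q = 0 := by
  constructor
  · rintro ⟨u, rfl⟩
    have h1 : ((u : Rinf) * ((u⁻¹ : Rinfˣ) : Rinf)).val = 1 := by rw [u.mul_inv]; rfl
    have hu : IsUnit ((u : Rinf)).val := IsUnit.of_mul_eq_one _ h1
    obtain ⟨q, hq, hCq⟩ := Polynomial.isUnit_iff.1 hu
    have hdd : dd (u : Rinf) = q := by
      rw [dd_apply, ← hCq, Polynomial.coeff_C]; simp
    obtain ⟨h1', h2'⟩ := unit_dd u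
    exact ⟨q, hCq.symm, by rwa [hdd] at h1', by rwa [hdd] at h2'⟩
  · rintro ⟨q, hfq, hq0, hv0⟩
    have hmem : Polynomial.C q⁻¹ ∈ Rinf := by
      rw [mem_Rinf_iff, Polynomial.coeff_C]
      norm_num [v_inv, hv0]
    refine IsUnit.of_mul_eq_one (a := f) ⟨Polynomial.C q⁻¹, hmem⟩ (Subtype.ext ?_)
    show f.val * Polynomial.C q⁻¹ = 1
    rw [hfq, ← Polynomial.C_mul, mul_inv_cancel₀ hq0, Polynomial.C_1]

/-- the constant `pr 0` in `Rinf` -/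
def P0 : Rinf :=
  ⟨Polynomial.C (pr 0 : ℚ), by simp [mem_Rinf_iff, Polynomial.coeff_C, v_pr]⟩

lemma P0_not_unit : ¬ IsUnit P0 := by
  intro hu
  rw [isUnit_iff_inf] at hu
  obtain ⟨q, hq, -, hv⟩ := hu
  have : q = (pr 0 : ℚ) := (Polynomial.C_inj.1 hq.symm)
  rw [this, v_pr, if_pos rfl] at hv
  exact one_ne_zero hv

lemma irr_inf_struct (f : Rinf) (hf : Irreducible f) :
    dd f ≠ 0 ∧
      ((∃ q : ℚ, f.val = Polynomial.C q ∧ v 0 q = 1) ∨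
       ((¬ ∃ q : ℚ, f.val = Polynomial.C q) ∧ v 0 (dd f) = 0)) := by
  have hfac : dd f = 0 ∨ 1 ≤ v 0 (dd f) →
      ∃ g : Rinf, f = P0 * g ∧ g.val = f.val * Polynomial.C ((pr 0 : ℚ))⁻¹ := by
    intro h1
    have hmem : f.val * Polynomial.C ((pr 0 : ℚ))⁻¹ ∈ Rinf := by
      rw [mem_Rinf_iff, Polynomial.coeff_mul_C, ← dd_apply]
      rcases h1 with h1 | h1
      · rw [h1, zero_mul, v_zero]
      · have hne : dd f ≠ 0 := by
          intro h0; rw [h0, v_zero] at h1; omega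
        rw [v_mul 0 hne (inv_ne_zero (pr_ne_zero 0)), v_inv, v_pr, if_pos rfl]
        omega
    refine ⟨⟨_, hmem⟩, Subtype.ext ?_, rfl⟩
    show f.val = Polynomial.C (pr 0 : ℚ) * (f.val * Polynomial.C ((pr 0 : ℚ))⁻¹)
    rw [mul_comm, mul_assoc, ← Polynomial.C_mul, inv_mul_cancel₀ (pr_ne_zero 0),
      Polynomial.C_1, mul_one]
  have hdd : dd f ≠ 0 := by
    intro h0
    obtain ⟨g, hfg, hgval⟩ := hfac (Or.inl h0)
    rcases hf.isUnit_or_isUnit hfg with hu | hu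
    · exact P0_not_unit hu
    · rw [isUnit_iff_inf] at hu
      obtain ⟨q, hq, hq0, -⟩ := hu
      have hcg : g.val.coeff 0 = 0 := by
        rw [hgval, Polynomial.coeff_mul_C, ← dd_apply, h0, zero_mul]
      rw [hq] at hcg
      simp at hcg
      exact hq0 hcg
  refine ⟨hdd, ?_⟩
  by_cases hconst : ∃ q : ℚ, f.val = Polynomial.C q
  · left
    obtain ⟨q, hq⟩ := hconst
    have hdq : dd f = q := by rw [dd_apply, hq]; simp [Polynomial.coeff_C]
    refine ⟨q, hq, ?_⟩
    have hge : 0 ≤ v 0 q := hdq ▸ dd_nonneg f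
    have hqne : q ≠ 0 := by rwa [hdq] at hdd
    have hne0 : v 0 q ≠ 0 := by
      intro h0
      exact hf.not_isUnit ((isUnit_iff_inf f).2 ⟨q, hq, hqne, h0⟩)
    by_contra hne1
    obtain ⟨g, hfg, hgval⟩ := hfac (Or.inr (by rw [hdq]; omega))
    rcases hf.isUnit_or_isUnit hfg with hu | hu
    · exact P0_not_unit hu
    · rw [isUnit_iff_inf] at hu
      obtain ⟨q', hq', -, hvq'⟩ := hu
      have hcg : g.val.coeff 0 = q * (pr 0 : ℚ)⁻¹ := by
        rw [hgval, Polynomial.coeff_mul_C, ← dd_apply, hdq]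
      rw [hq'] at hcg
      simp at hcg
      have hval : v 0 (q * (pr 0 : ℚ)⁻¹) = v 0 q - 1 := by
        rw [v_mul 0 hqne (inv_ne_zero (pr_ne_zero 0)), v_inv, v_pr, if_pos rfl]
        ring
      rw [hcg, hval] at hvq'
      omega
  · right
    refine ⟨hconst, ?_⟩
    have hge := dd_nonneg f
    by_contra hne
    have h1 : 1 ≤ v 0 (dd f) := by omega
    obtain ⟨g, hfg, hgval⟩ := hfac (Or.inr h1)
    rcases hf.isUnit_or_isUnit hfg with hu | hu
    · exact P0_not_unit hu
    · rw [isUnit_iff_inf] at hu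
      obtain ⟨q', hq', -, -⟩ := hu
      apply hconst
      refine ⟨(pr 0 : ℚ) * q', ?_⟩
      have hv : f.val = Polynomial.C (pr 0 : ℚ) * g.val := congrArg Subtype.val hfg
      rw [hv, hq', ← Polynomial.C_mul]

lemma assoc_val {f g : Rinf} (h : Associated f g) : Associated f.val g.val := by
  obtain ⟨u, hu⟩ := h
  exact ⟨Units.map (Rinf.subtype : Rinf →+* Polynomial ℚ).toMonoidHom u,
    congrArg Subtype.val hu⟩

/-- the induced map on associate classes -/
def FF : Associates Rinf → Associates (Polynomial ℚ) :=
  Quotient.lift (fun f : Rinf => Associates.mk f.val)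
    (fun _ _ hfg => Associates.mk_eq_mk_iff_associated.2 (assoc_val hfg))

lemma FF_mk (f : Rinf) : FF (Associates.mk f) = Associates.mk f.val := rfl

lemma idf_inf : IsIDFDomain Rinf := by
  intro a ha
  have haval : (a.val : Polynomial ℚ) ≠ 0 := fun h => ha (Subtype.ext h)
  have hA : Associates.mk a.val ≠ 0 := Associates.mk_ne_zero.2 haval
  haveI : Fintype (Associates (Polynomial ℚ))ˣ := Unique.fintype
  have hT : {d : Associates (Polynomial ℚ) | d ∣ Associates.mk a.val}.Finite :=
    @Finite.of_fintype _ (UniqueFactorizationMonoid.fintypeSubtypeDvd (Associates.mk a.val) hA)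
  apply Set.Finite.of_finite_image (f := FF)
  · refine hT.subset ?_
    rintro d ⟨p, hp, rfl⟩
    obtain ⟨f, rfl⟩ := Associates.mk_surjective p
    rw [FF_mk, Set.mem_setOf_eq, Associates.mk_dvd_mk]
    obtain ⟨c, hc⟩ := Associates.mk_dvd_mk.1 hp.2
    exact ⟨c.val, congrArg Subtype.val hc⟩
  · intro p hp q hq hFpq
    obtain ⟨f, rfl⟩ := Associates.mk_surjective p
    obtain ⟨g, rfl⟩ := Associates.mk_surjective q
    have hfirr := Associates.irreducible_mk.1 hp.1
    have hgirr := Associates.irreducible_mk.1 hq.1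
    rw [FF_mk, FF_mk, Associates.mk_eq_mk_iff_associated] at hFpq
    obtain ⟨U, hU⟩ := hFpq
    obtain ⟨cq, hcu, hCc⟩ := Polynomial.isUnit_iff.1 U.isUnit
    have hcne : cq ≠ 0 := hcu.ne_zero
    have hU' : f.val * Polynomial.C cq = g.val := by rw [hCc]; exact hU
    obtain ⟨hfdd, hfcase⟩ := irr_inf_struct f hfirr
    obtain ⟨hgdd, hgcase⟩ := irr_inf_struct g hgirr
    have hddmul : dd g = dd f * cq := by
      rw [dd_apply, dd_apply, ← hU', Polynomial.coeff_mul_C]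
    have hvc : v 0 cq = 0 := by
      rcases hfcase with ⟨qf, hqf, hv1f⟩ | ⟨hfnc, hvf⟩
      · rcases hgcase with ⟨qg, hqg, hv1g⟩ | ⟨hgnc, hvg⟩
        · have hqfne : qf ≠ 0 := by
            intro h0
            apply hfdd
            rw [dd_apply, hqf, h0]; simp
          have : qf * cq = qg := by
            rw [hqf, ← Polynomial.C_mul] at hU'
            exact Polynomial.C_inj.1 (hU'.trans hqg)
          have := congrArg (v 0) this
          rw [v_mul 0 hqfne hcne, hv1f, hv1g] at this
          omega
        · exfalso
          apply hgnc
          exact ⟨qf * cq, by rw [← hU', hqf, ← Polynomial.C_mul]⟩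
      · rcases hgcase with ⟨qg, hqg, hv1g⟩ | ⟨hgnc, hvg⟩
        · exfalso
          apply hfnc
          refine ⟨qg * cq⁻¹, ?_⟩
          have : f.val = f.val * Polynomial.C cq * Polynomial.C cq⁻¹ := by
            rw [mul_assoc, ← Polynomial.C_mul, mul_inv_cancel₀ hcne, Polynomial.C_1, mul_one]
          rw [this, hU', hqg, ← Polynomial.C_mul]
        · have := congrArg (v 0) hddmul
          rw [v_mul 0 hfdd hcne, hvf, hvg] at this
          omega
    have hmemc : Polynomial.C cq ∈ Rinf := by
      rw [mem_Rinf_iff, Polynomial.coeff_C]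
      simp [hvc]
    have hunit : IsUnit (⟨Polynomial.C cq, hmemc⟩ : Rinf) :=
      (isUnit_iff_inf _).2 ⟨cq, rfl, hcne, hvc⟩
    obtain ⟨u, hu⟩ := hunit
    rw [Associates.mk_eq_mk_iff_associated]
    exact ⟨u, Subtype.ext (by rw [hu]; exact hU')⟩


end
end NonAtomicIDF

namespace NonAtomicIDF
noncomputable section
lemma X_mem_inf : (Polynomial.X : Polynomial ℚ) ∈ Rinf := by
  rw [mem_Rinf_iff, Polynomial.coeff_X_zero, v_zero]

lemma not_atomic_inf : ¬ (∀ a : Rinf, a ≠ 0 → IsAtomicElem a) := by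
  intro hall
  have hX : (⟨Polynomial.X, X_mem_inf⟩ : Rinf) ≠ 0 := fun h =>
    Polynomial.X_ne_zero (congrArg Subtype.val h)
  obtain ⟨s, hs, hassoc⟩ := hall _ hX
  obtain ⟨u, hu⟩ := hassoc
  have hcc := congrArg dd hu
  rw [map_mul, map_multiset_prod] at hcc
  have hdX : dd (⟨Polynomial.X, X_mem_inf⟩ : Rinf) = 0 := by
    rw [dd_apply]; exact Polynomial.coeff_X_zero
  rw [hdX] at hcc
  have hne : (Multiset.map dd s).prod ≠ 0 := by
    apply Multiset.prod_ne_zero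
    intro h0
    obtain ⟨f, hfs, hf0⟩ := Multiset.mem_map.1 h0
    exact (irr_inf_struct f (hs f hfs)).1 hf0
  exact (mul_ne_zero hne (unit_dd u).1) hcc

lemma v_A (k : ℕ) : v 0 ((pr 1 ^ k : ℕ) : ℚ) = 0 := by
  rw [v, padicValRat.of_nat]
  have h : padicValNat (pr 0) (pr 1 ^ k) = 0 := by
    apply padicValNat.eq_zero_of_not_dvd
    intro hdvd
    have h1 := (Nat.Prime.dvd_of_dvd_pow (pr_prime 0) hdvd)
    have h2 := (Nat.prime_dvd_prime_iff_eq (pr_prime 0) (pr_prime 1)).1 h1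
    exact (by norm_num : (0:ℕ) ≠ 1) (pr_inj h2)
  simp [h]

lemma A_ne (k : ℕ) : ((pr 1 ^ k : ℕ) : ℚ) ≠ 0 := by
  have h : 0 < pr 1 ^ k := pow_pos (pr_prime 1).pos k
  exact_mod_cast h.ne'

def alf (k : ℕ) : Rinf :=
  ⟨Polynomial.X + Polynomial.C ((pr 1 ^ k : ℕ) : ℚ), by
    rw [mem_Rinf_iff]
    simp only [Polynomial.coeff_add, Polynomial.coeff_X_zero, Polynomial.coeff_C, zero_add,
      if_pos rfl]
    exact v_nat_nonneg 0 _⟩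

lemma alf_coeff0 (k : ℕ) : (alf k).val.coeff 0 = ((pr 1 ^ k : ℕ) : ℚ) := by
  show (Polynomial.X + Polynomial.C ((pr 1 ^ k : ℕ) : ℚ)).coeff 0 = _
  rw [Polynomial.coeff_add, Polynomial.coeff_X_zero, Polynomial.coeff_C, if_pos rfl, zero_add]

lemma alf_coeff1 (k : ℕ) : (alf k).val.coeff 1 = 1 := by
  show (Polynomial.X + Polynomial.C ((pr 1 ^ k : ℕ) : ℚ)).coeff 1 = (1 : ℚ)
  rw [Polynomial.coeff_add, Polynomial.coeff_X_one, Polynomial.coeff_C]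
  norm_num

lemma constant_factor_unit (g h : Rinf) (hdeg : g.val.natDegree = 0)
    (hne : (g.val * h.val).coeff 0 ≠ 0) (hv : v 0 ((g.val * h.val).coeff 0) = 0) :
    IsUnit g := by
  obtain ⟨cg, hcg⟩ := Polynomial.natDegree_eq_zero.1 hdeg
  have hc0 : (g.val * h.val).coeff 0 = cg * h.val.coeff 0 := by
    rw [Polynomial.mul_coeff_zero, ← hcg, Polynomial.coeff_C]; simp
  rw [hc0] at hne hv
  have hcgne : cg ≠ 0 := left_ne_zero_of_mul hne
  have hhne : h.val.coeff 0 ≠ 0 := right_ne_zero_of_mul hne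
  rw [v_mul 0 hcgne hhne] at hv
  have m1 : 0 ≤ v 0 cg := by
    have := g.2
    rw [mem_Rinf_iff, ← hcg, Polynomial.coeff_C] at this
    simpa using this
  have m2 : 0 ≤ v 0 (h.val.coeff 0) := h.2
  exact (isUnit_iff_inf g).2 ⟨cg, hcg.symm, hcgne, by omega⟩

lemma alf_irr (k : ℕ) : Irreducible (alf k) := by
  constructor
  · intro hu
    rw [isUnit_iff_inf] at hu
    obtain ⟨q, hq, -, -⟩ := hu
    have hdeg := congrArg Polynomial.natDegree hq
    rw [Polynomial.natDegree_C] at hdeg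
    have : (alf k).val.natDegree = 1 := Polynomial.natDegree_X_add_C _
    omega
  · intro g h hgh
    have hval : (alf k).val = g.val * h.val := congrArg Subtype.val hgh
    have halfne : (alf k).val ≠ 0 := Polynomial.X_add_C_ne_zero _
    have hprodne : g.val * h.val ≠ 0 := hval ▸ halfne
    have hg0 : g.val ≠ 0 := left_ne_zero_of_mul hprodne
    have hh0 : h.val ≠ 0 := right_ne_zero_of_mul hprodne
    have h1 : (g.val * h.val).natDegree = 1 := by
      rw [← hval]; exact Polynomial.natDegree_X_add_C _
    rw [Polynomial.natDegree_mul hg0 hh0] at h1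
    have hne : (g.val * h.val).coeff 0 ≠ 0 := by
      rw [← hval, alf_coeff0]; exact A_ne k
    have hv : v 0 ((g.val * h.val).coeff 0) = 0 := by
      rw [← hval, alf_coeff0]; exact v_A k
    have : g.val.natDegree = 0 ∨ h.val.natDegree = 0 := by omega
    rcases this with hd | hd
    · exact Or.inl (constant_factor_unit g h hd hne hv)
    · refine Or.inr (constant_factor_unit h g hd ?_ ?_)
      · rwa [mul_comm] at hne
      · rwa [mul_comm] at hv

lemma alf_inj : Function.Injective (fun k => Associates.mk (alf k)) := by
  intro k m h
  simp only at h
  rw [Associates.mk_eq_mk_iff_associated] at h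
  obtain ⟨u, hu⟩ := h
  have hval : (alf k).val * ((u : Rinf)).val = (alf m).val := congrArg Subtype.val hu
  obtain ⟨cq, hcu, hCc⟩ := Polynomial.isUnit_iff.1 (u.isUnit.map Rinf.subtype)
  have hCc' : Polynomial.C cq = ((u : Rinf)).val := hCc
  rw [← hCc'] at hval
  have h1 := congrArg (fun p : Polynomial ℚ => p.coeff 1) hval
  simp only [Polynomial.coeff_mul_C, alf_coeff1] at h1
  have h0 := congrArg (fun p : Polynomial ℚ => p.coeff 0) hval
  simp only [Polynomial.coeff_mul_C, alf_coeff0] at h0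
  rw [one_mul] at h1
  rw [h1, mul_one] at h0
  have hnat : pr 1 ^ k = pr 1 ^ m := Nat.cast_injective h0
  exact Nat.pow_right_injective (pr_prime 1).two_le hnat

lemma encard_inf : {p : Associates Rinf | Irreducible p}.encard = ⊤ := by
  apply Set.Infinite.encard_eq
  exact Set.infinite_of_injective_forall_mem alf_inj
    (fun k => Associates.irreducible_mk.2 (alf_irr k))

lemma countable_inf : {p : Associates Rinf | Irreducible p}.Countable := by
  haveI : Countable (AddMonoidAlgebra ℚ ℕ) := Function.Injective.countable
    (f := fun p : AddMonoidAlgebra ℚ ℕ => p.coeff) (by intro a b h; cases a; cases b; cases h; rfl)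
  haveI : Countable (Polynomial ℚ) := Polynomial.toFinsupp_injective.countable
  haveI : Countable Rinf := inferInstance
  haveI : Countable (Associates Rinf) := Quotient.countable
  exact Set.to_countable _

end
end NonAtomicIDF


/-- For every `ℓ ∈ ℕ≥1 ∪ {∞}` there exists an integral domain that is an IDF
domain, is not atomic, and has exactly `ℓ` irreducible elements up to associates (the set of
associate classes of irreducibles has extended cardinality `ℓ`, and it is countable, so that
in the case `ℓ = ∞` it is countably infinite). -/
theorem exists_nonatomic_idf_domain_with_prescribed_atoms :
    ∀ ℓ : ℕ∞, 1 ≤ ℓ →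
      ∃ (R : Type) (_ : CommRing R) (_ : IsDomain R),
        IsIDFDomain R ∧
        ¬ (∀ a : R, a ≠ 0 → IsAtomicElem a) ∧
        {p : Associates R | Irreducible p}.encard = ℓ ∧
        {p : Associates R | Irreducible p}.Countable := by
  intro ℓ hℓ
  induction ℓ using ENat.recTopCoe with
  | top =>
    exact ⟨NonAtomicIDF.Rinf, inferInstance, inferInstance, NonAtomicIDF.idf_inf,
      NonAtomicIDF.not_atomic_inf, NonAtomicIDF.encard_inf, NonAtomicIDF.countable_inf⟩
  | coe n =>
    have hn : 0 < n := by
      have h1 : (1 : ℕ) ≤ n := by exact_mod_cast hℓ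
      omega
    exact ⟨NonAtomicIDF.Rfin n, inferInstance, inferInstance, NonAtomicIDF.idf_fin hn,
      NonAtomicIDF.not_atomic_fin hn, NonAtomicIDF.encard_fin hn, NonAtomicIDF.countable_fin hn⟩
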